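/- Let n ≥ 1 and let μ be a finite Borel measure on ℝ^n such that, for some A > 0, r₀ > 0, and α ∈ [0, n], one has μ(B(z,r)) ≤ A·r^α for all r ∈ (0, r₀) and all z ∈ ℝ^n (closed balls). Let f : ℝ^n → [0,∞] be Borel measurable and let p > max{1, n − α}. Then for every r ∈ (0, r₀): ∫_{B(0,r)} ∫_0^1 ∫_{ℝ^n} f(z + t·x) dμ(z) dt dx ≤ (A^{1/p}·p/(p − n + α)) · r^{α/p} · [ω_n·r^n·μ(ℝ^n)]^{(p-1)/p} · ‖f‖_{L^p(Ω)}, where Ω = N(spt μ, r) is the closed r-neighborhood of the support of μ, ω_n is the Lebesgue volume of the unit ball in ℝ^n, and the outer integral in x is with respect to Lebesgue measure on B(0,r). -/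

import Mathlib

open MeasureTheory Set Metric
open scoped ENNReal

/-- The support of a Borel measure: the set of points all of whose open neighborhoods
have positive measure. -/
def msupport {X : Type*} [TopologicalSpace X] [MeasurableSpace X] (μ : Measure X) :
    Set X :=
  {x | ∀ U : Set X, IsOpen U → x ∈ U → 0 < μ U}

lemma msupport_compl_null {X : Type*} [TopologicalSpace X] [MeasurableSpace X]
    [SecondCountableTopology X] (μ : Measure X) :
    μ (msupport μ)ᶜ = 0 := by
  obtain ⟨T, Tcount, TS, hTS⟩ :=
    TopologicalSpace.isOpen_sUnion_countable {U : Set X | IsOpen U ∧ μ U = 0}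
      fun s hs => hs.1
  have hsub : (msupport μ)ᶜ ⊆ ⋃₀ T := by
    rw [hTS]
    intro x hx
    simp only [msupport, mem_compl_iff, mem_setOf_eq, not_forall] at hx
    obtain ⟨U, hU, hxU, hμU⟩ := hx
    exact ⟨U, ⟨hU, le_zero_iff.1 (not_lt.1 hμU)⟩, hxU⟩
  exact measure_mono_null hsub ((measure_sUnion_null_iff Tcount).2 fun s hs => (TS hs).2)

section helpers

variable {n : ℕ}

lemma meas_ballmass (μ : Measure (EuclideanSpace ℝ (Fin n))) [SFinite μ] (s : ℝ) :
    Measurable fun y : EuclideanSpace ℝ (Fin n) => μ (closedBall y s) := by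
  have hW : MeasurableSet {q : EuclideanSpace ℝ (Fin n) × EuclideanSpace ℝ (Fin n) |
      dist q.1 q.2 ≤ s} :=
    (isClosed_le (continuous_fst.dist continuous_snd) continuous_const).measurableSet
  have h1 : (fun y : EuclideanSpace ℝ (Fin n) => μ (closedBall y s)) =
      fun y => ∫⁻ z, ({q : EuclideanSpace ℝ (Fin n) × EuclideanSpace ℝ (Fin n) |
        dist q.1 q.2 ≤ s}.indicator 1 (y, z)) ∂μ := by
    funext y
    rw [← lintegral_indicator_one measurableSet_closedBall]
    congr 1
    funext z
    by_cases h : dist z y ≤ s <;>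
      simp [Set.indicator, mem_closedBall, dist_comm, h]
  rw [h1]
  exact Measurable.lintegral_prod_right' (measurable_one.indicator hW)

lemma total_mass (μ : Measure (EuclideanSpace ℝ (Fin n))) [IsFiniteMeasure μ] {s : ℝ}
    (hs : 0 ≤ s) :
    ∫⁻ y, μ (closedBall y s) ∂volume =
      ENNReal.ofReal (s ^ n) * volume (ball (0 : EuclideanSpace ℝ (Fin n)) 1) * μ univ := by
  have hW : MeasurableSet {q : EuclideanSpace ℝ (Fin n) × EuclideanSpace ℝ (Fin n) |
      dist q.1 q.2 ≤ s} :=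
    (isClosed_le (continuous_fst.dist continuous_snd) continuous_const).measurableSet
  have h1 : ∀ y : EuclideanSpace ℝ (Fin n), μ (closedBall y s) =
      ∫⁻ z, ({q : EuclideanSpace ℝ (Fin n) × EuclideanSpace ℝ (Fin n) |
        dist q.1 q.2 ≤ s}.indicator 1 (y, z)) ∂μ := by
    intro y
    rw [← lintegral_indicator_one measurableSet_closedBall]
    congr 1
    funext z
    by_cases h : dist z y ≤ s <;>
      simp [Set.indicator, mem_closedBall, dist_comm, h]
  calc ∫⁻ y, μ (closedBall y s) ∂volume
      = ∫⁻ y, ∫⁻ z, ({q : EuclideanSpace ℝ (Fin n) × EuclideanSpace ℝ (Fin n) |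
          dist q.1 q.2 ≤ s}.indicator 1 (y, z)) ∂μ ∂volume := lintegral_congr h1
    _ = ∫⁻ z, ∫⁻ y, ({q : EuclideanSpace ℝ (Fin n) × EuclideanSpace ℝ (Fin n) |
          dist q.1 q.2 ≤ s}.indicator 1 (y, z)) ∂volume ∂μ :=
        lintegral_lintegral_swap (measurable_one.indicator hW).aemeasurable
    _ = ∫⁻ _z, ENNReal.ofReal (s ^ n) *
          volume (ball (0 : EuclideanSpace ℝ (Fin n)) 1) ∂μ := by
        apply lintegral_congr
        intro z
        have h2 : (fun y => ({q : EuclideanSpace ℝ (Fin n) × EuclideanSpace ℝ (Fin n) |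
            dist q.1 q.2 ≤ s}.indicator 1 (y, z))) =
            (closedBall z s).indicator (1 : EuclideanSpace ℝ (Fin n) → ℝ≥0∞) := by
          funext y
          by_cases h : dist y z ≤ s <;> simp [Set.indicator, mem_closedBall, h]
        rw [h2, lintegral_indicator_one measurableSet_closedBall,
          Measure.addHaar_closedBall _ _ hs, finrank_euclideanSpace_fin]
    _ = ENNReal.ofReal (s ^ n) * volume (ball (0 : EuclideanSpace ℝ (Fin n)) 1) * μ univ := by
        rw [lintegral_const]

lemma cov (f : EuclideanSpace ℝ (Fin n) → ℝ≥0∞) (hf : Measurable f)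
    (z : EuclideanSpace ℝ (Fin n)) {t r : ℝ} (ht : 0 < t) :
    ∫⁻ x in closedBall (0 : EuclideanSpace ℝ (Fin n)) r, f (z + t • x) ∂volume =
      ENNReal.ofReal ((t ^ n)⁻¹) * ∫⁻ y in closedBall z (t * r), f y ∂volume := by
  set H : EuclideanSpace ℝ (Fin n) → ℝ≥0∞ := (closedBall z (t * r)).indicator f with hH
  have hHm : Measurable H := hf.indicator measurableSet_closedBall
  have hmem : ∀ x : EuclideanSpace ℝ (Fin n),
      z + t • x ∈ closedBall z (t * r) ↔ x ∈ closedBall (0 : EuclideanSpace ℝ (Fin n)) r := by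
    intro x
    simp only [mem_closedBall, dist_eq_norm, add_sub_cancel_left, sub_zero, norm_smul,
      Real.norm_eq_abs, abs_of_pos ht]
    exact mul_le_mul_iff_right₀ ht
  have key : ∀ x, (closedBall (0 : EuclideanSpace ℝ (Fin n)) r).indicator
      (fun x => f (z + t • x)) x = H (z + t • x) := by
    intro x
    by_cases hx : x ∈ closedBall (0 : EuclideanSpace ℝ (Fin n)) r
    · rw [indicator_of_mem hx, hH, indicator_of_mem ((hmem x).2 hx)]
    · rw [indicator_of_notMem hx, hH, indicator_of_notMem (fun h => hx ((hmem x).1 h))]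
  calc ∫⁻ x in closedBall (0 : EuclideanSpace ℝ (Fin n)) r, f (z + t • x) ∂volume
      = ∫⁻ x, H (z + t • x) ∂volume := by
        rw [← lintegral_indicator measurableSet_closedBall]
        exact lintegral_congr key
    _ = ∫⁻ y, H (z + y) ∂(Measure.map (t • · : EuclideanSpace ℝ (Fin n) → _) volume) :=
        (lintegral_map (hHm.comp (measurable_const_add z)) (measurable_const_smul t)).symm
    _ = ENNReal.ofReal ((t ^ n)⁻¹) * ∫⁻ y, H (z + y) ∂volume := by
        rw [Measure.map_addHaar_smul volume ht.ne', lintegral_smul_measure,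
          finrank_euclideanSpace_fin, abs_of_nonneg (by positivity : (0:ℝ) ≤ (t ^ n)⁻¹), smul_eq_mul]
    _ = ENNReal.ofReal ((t ^ n)⁻¹) * ∫⁻ y, H y ∂volume := by
        rw [← lintegral_map hHm (measurable_const_add z),
          Measure.IsAddLeftInvariant.map_add_left_eq_self]
    _ = ENNReal.ofReal ((t ^ n)⁻¹) * ∫⁻ y in closedBall z (t * r), f y ∂volume := by
        rw [hH, lintegral_indicator measurableSet_closedBall]

lemma per_t (μ : Measure (EuclideanSpace ℝ (Fin n))) [IsFiniteMeasure μ]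
    (f : EuclideanSpace ℝ (Fin n) → ℝ≥0∞) (hf : Measurable f) {t r : ℝ} (ht : 0 < t) :
    ∫⁻ x in closedBall (0 : EuclideanSpace ℝ (Fin n)) r, ∫⁻ z, f (z + t • x) ∂μ ∂volume =
      ENNReal.ofReal ((t ^ n)⁻¹) * ∫⁻ y, f y * μ (closedBall y (t * r)) ∂volume := by
  have hW : MeasurableSet {q : EuclideanSpace ℝ (Fin n) × EuclideanSpace ℝ (Fin n) |
      dist q.2 q.1 ≤ t * r} :=
    (isClosed_le (continuous_snd.dist continuous_fst) continuous_const).measurableSet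
  have hm1 : Measurable fun q : EuclideanSpace ℝ (Fin n) × EuclideanSpace ℝ (Fin n) =>
      f (q.2 + t • q.1) :=
    hf.comp (continuous_snd.add (continuous_fst.const_smul t)).measurable
  calc ∫⁻ x in closedBall (0 : EuclideanSpace ℝ (Fin n)) r, ∫⁻ z, f (z + t • x) ∂μ ∂volume
      = ∫⁻ z, ∫⁻ x in closedBall (0 : EuclideanSpace ℝ (Fin n)) r, f (z + t • x) ∂volume ∂μ :=
        lintegral_lintegral_swap hm1.aemeasurable
    _ = ∫⁻ z, ENNReal.ofReal ((t ^ n)⁻¹) *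
          ∫⁻ y in closedBall z (t * r), f y ∂volume ∂μ :=
        lintegral_congr fun z => cov f hf z ht
    _ = ENNReal.ofReal ((t ^ n)⁻¹) *
          ∫⁻ z, ∫⁻ y in closedBall z (t * r), f y ∂volume ∂μ := by
        rw [lintegral_const_mul' _ _ ENNReal.ofReal_ne_top]
    _ = ENNReal.ofReal ((t ^ n)⁻¹) *
          ∫⁻ z, ∫⁻ y, f y * ({q : EuclideanSpace ℝ (Fin n) × EuclideanSpace ℝ (Fin n) |
            dist q.2 q.1 ≤ t * r}.indicator 1 (z, y)) ∂volume ∂μ := by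
        congr 1
        apply lintegral_congr
        intro z
        rw [← lintegral_indicator measurableSet_closedBall]
        apply lintegral_congr
        intro y
        by_cases h : dist y z ≤ t * r <;> simp [Set.indicator, mem_closedBall, h]
    _ = ENNReal.ofReal ((t ^ n)⁻¹) *
          ∫⁻ y, ∫⁻ z, f y * ({q : EuclideanSpace ℝ (Fin n) × EuclideanSpace ℝ (Fin n) |
            dist q.2 q.1 ≤ t * r}.indicator 1 (z, y)) ∂μ ∂volume := by
        congr 1
        exact lintegral_lintegral_swap
          ((hf.comp measurable_snd).mul (measurable_one.indicator hW)).aemeasurable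
    _ = ENNReal.ofReal ((t ^ n)⁻¹) * ∫⁻ y, f y * μ (closedBall y (t * r)) ∂volume := by
        congr 1
        apply lintegral_congr
        intro y
        calc ∫⁻ z, f y * ({q : EuclideanSpace ℝ (Fin n) × EuclideanSpace ℝ (Fin n) |
              dist q.2 q.1 ≤ t * r}.indicator 1 (z, y)) ∂μ
            = ∫⁻ z, f y * (closedBall y (t * r)).indicator
                (1 : EuclideanSpace ℝ (Fin n) → ℝ≥0∞) z ∂μ := by
              apply lintegral_congr
              intro z
              by_cases h : dist z y ≤ t * r <;>
                simp [Set.indicator, mem_closedBall, dist_comm, h]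
          _ = f y * μ (closedBall y (t * r)) := by
              rw [lintegral_const_mul _ (measurable_one.indicator measurableSet_closedBall),
                lintegral_indicator_one measurableSet_closedBall]

lemma real_id {A t r p α : ℝ} (hA : 0 < A) (ht : 0 < t) (hr : 0 < r) (hp : 0 < p) :
    (t ^ n)⁻¹ * ((A * (t * r) ^ α) ^ (1/p) * ((t * r) ^ n) ^ ((p-1)/p)) =
      t ^ ((α - n)/p) *
        (A ^ (1/p) * r ^ (α/p) * r ^ ((n : ℝ) * ((p-1)/p))) := by
  have hs : 0 < t * r := mul_pos ht hr
  have hcomb : t ^ (-(n:ℝ)) * (t ^ (α/p) * t ^ ((n:ℝ) * ((p-1)/p))) = t ^ ((α - (n:ℝ))/p) := by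
    rw [← Real.rpow_add ht, ← Real.rpow_add ht]
    congr 1
    field_simp
    ring
  rw [Real.mul_rpow hA.le (Real.rpow_nonneg hs.le α),
    ← Real.rpow_natCast (t*r) n, ← Real.rpow_natCast t n,
    ← Real.rpow_mul hs.le, ← Real.rpow_mul hs.le,
    Real.mul_rpow ht.le hr.le, Real.mul_rpow ht.le hr.le,
    ← Real.rpow_neg ht.le, mul_one_div, ← hcomb]
  ring

lemma lint_rpow_Ioc {e : ℝ} (he : -1 < e) :
    ∫⁻ t in Ioc (0:ℝ) 1, ENNReal.ofReal (t ^ e) ∂volume = ENNReal.ofReal (1/(e+1)) := by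
  have hint : IntegrableOn (fun t : ℝ => t ^ e) (Ioc 0 1) volume :=
    (intervalIntegral.intervalIntegrable_rpow' he).1
  have hnn : 0 ≤ᵐ[volume.restrict (Ioc (0:ℝ) 1)] fun t => t ^ e :=
    (ae_restrict_iff' measurableSet_Ioc).2 (ae_of_all _ fun t ht => Real.rpow_nonneg ht.1.le _)
  rw [← ofReal_integral_eq_lintegral_ofReal hint hnn]
  congr 1
  rw [← intervalIntegral.integral_of_le zero_le_one, integral_rpow (Or.inl he),
    Real.one_rpow, Real.zero_rpow (by linarith : e + 1 ≠ 0), sub_zero]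

end helpers

theorem stmt3 (n : ℕ) (hn : 1 ≤ n)
    (μ : Measure (EuclideanSpace ℝ (Fin n))) [IsFiniteMeasure μ]
    (A r₀ α : ℝ) (hA : 0 < A) (hr₀ : 0 < r₀) (hα0 : 0 ≤ α) (hαn : α ≤ n)
    (hgrowth : ∀ (z : EuclideanSpace ℝ (Fin n)) (r : ℝ), 0 < r → r < r₀ →
      μ (closedBall z r) ≤ ENNReal.ofReal (A * r ^ α))
    (f : EuclideanSpace ℝ (Fin n) → ℝ≥0∞) (hf : Measurable f)
    (p : ℝ) (hp : max 1 ((n : ℝ) - α) < p)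
    (r : ℝ) (hr : 0 < r) (hrr₀ : r < r₀) :
    (∫⁻ x in closedBall (0 : EuclideanSpace ℝ (Fin n)) r,
        ∫⁻ t in Icc (0 : ℝ) 1, ∫⁻ z, f (z + t • x) ∂μ ∂volume ∂volume) ≤
      ENNReal.ofReal (A ^ (1 / p) * p / (p - n + α) * r ^ (α / p)) *
        (volume (ball (0 : EuclideanSpace ℝ (Fin n)) 1) * ENNReal.ofReal (r ^ n) *
            μ univ) ^ ((p - 1) / p) *
        (∫⁻ x in cthickening r (msupport μ), f x ^ p ∂volume) ^ (1 / p) := by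
  classical
  have hp1 : 1 < p := lt_of_le_of_lt (le_max_left _ _) hp
  have hpnα : (n : ℝ) - α < p := lt_of_le_of_lt (le_max_right _ _) hp
  have hppos : 0 < p := lt_trans one_pos hp1
  have hp0 : p ≠ 0 := hppos.ne'
  have hpα : 0 < p - n + α := by linarith
  have hq : p.HolderConjugate (p / (p - 1)) := Real.HolderConjugate.conjExponent hp1
  set q : ℝ := p / (p - 1) with hqdef
  have hq1 : 1 < q := hq.symm.lt
  have hqq : 0 < q := hq.symm.pos
  have hq1nn : 0 ≤ q - 1 := by linarith
  have h1q : 0 ≤ 1 / q := le_of_lt (one_div_pos.2 hqq)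
  have h1p : 0 ≤ 1 / p := le_of_lt (one_div_pos.2 hppos)
  have hep : 0 ≤ (p - 1) / p := div_nonneg (by linarith) hppos.le
  have he1 : (q - 1) * (1 / q) = 1 / p := by
    rw [hqdef]
    have hp1' : p - 1 ≠ 0 := sub_ne_zero.2 hp1.ne'
    field_simp
    ring
  have he2 : 1 / q = (p - 1) / p := by rw [hqdef, one_div_div]
  set Ω : Set (EuclideanSpace ℝ (Fin n)) := cthickening r (msupport μ) with hΩdef
  have hΩm : MeasurableSet Ω := isClosed_cthickening.measurableSet
  set K : ℝ≥0∞ := ∫⁻ x in Ω, f x ^ p ∂volume with hKdef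
  set V : ℝ≥0∞ := volume (ball (0 : EuclideanSpace ℝ (Fin n)) 1) with hVdef
  set M : ℝ≥0∞ := μ univ with hMdef
  have hvanish : ∀ s : ℝ, s ≤ r → ∀ y, y ∉ Ω → μ (closedBall y s) = 0 := by
    intro s hsr y hy
    have hsub : closedBall y s ⊆ (msupport μ)ᶜ := by
      intro w hw hwsupp
      exact hy (mem_cthickening_of_dist_le y w r _ hwsupp
        (le_trans (by rw [dist_comm]; exact mem_closedBall.1 hw) hsr))
    exact measure_mono_null hsub (msupport_compl_null μ)
  set e : ℝ := (α - n) / p with hedef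
  have he : -1 < e := by
    rw [hedef, lt_div_iff₀ hppos]
    linarith
  set D : ℝ := A ^ (1/p) * r ^ (α/p) * r ^ ((n : ℝ) * ((p-1)/p)) with hDdef
  set C₀ : ℝ≥0∞ := ENNReal.ofReal D * ((V * M) ^ ((p-1)/p) * K ^ (1/p)) with hC₀def
  have key : ∀ t ∈ Ioc (0:ℝ) 1,
      (∫⁻ x in closedBall (0 : EuclideanSpace ℝ (Fin n)) r, ∫⁻ z, f (z + t • x) ∂μ ∂volume)
        ≤ ENNReal.ofReal (t ^ e) * C₀ := by
    intro t ht
    obtain ⟨ht0, ht1⟩ := ht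
    set s : ℝ := t * r with hsdef
    have hs0 : 0 < s := mul_pos ht0 hr
    have hsr : s ≤ r := by
      calc s = t * r := hsdef
        _ ≤ 1 * r := mul_le_mul_of_nonneg_right ht1 hr.le
        _ = r := one_mul r
    have hsr₀ : s < r₀ := lt_of_le_of_lt hsr hrr₀
    have hgz : ∀ y, μ (closedBall y s) ≤ ENNReal.ofReal (A * s ^ α) :=
      fun y => hgrowth y s hs0 hsr₀
    have b2 : ∫⁻ y, f y * μ (closedBall y s) ∂volume
        = ∫⁻ y in Ω, f y * μ (closedBall y s) ∂volume := by
      rw [← lintegral_indicator hΩm]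
      apply lintegral_congr
      intro y
      by_cases hy : y ∈ Ω
      · rw [indicator_of_mem hy]
      · rw [indicator_of_notMem hy, hvanish s hsr y hy, mul_zero]
    have b3 : ∫⁻ y in Ω, f y * μ (closedBall y s) ∂volume
        ≤ K ^ (1/p) * (∫⁻ y in Ω, μ (closedBall y s) ^ q ∂volume) ^ (1/q) := by
      have h0 := ENNReal.lintegral_mul_le_Lp_mul_Lq (volume.restrict Ω) hq
        hf.aemeasurable (meas_ballmass μ s).aemeasurable
      rw [hKdef]
      simpa using h0
    have b4 : ∫⁻ y in Ω, μ (closedBall y s) ^ q ∂volume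
        ≤ ENNReal.ofReal (A * s ^ α) ^ (q - 1) * (ENNReal.ofReal (s ^ n) * V * M) := by
      calc ∫⁻ y in Ω, μ (closedBall y s) ^ q ∂volume
          ≤ ∫⁻ y in Ω, ENNReal.ofReal (A * s ^ α) ^ (q - 1) * μ (closedBall y s) ∂volume := by
            apply lintegral_mono
            intro y
            show μ (closedBall y s) ^ q ≤ ENNReal.ofReal (A * s ^ α) ^ (q - 1) * μ (closedBall y s)
            have hsplit : μ (closedBall y s) ^ q
                = μ (closedBall y s) ^ (q - 1) * μ (closedBall y s) ^ (1:ℝ) := by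
              rw [← ENNReal.rpow_add_of_nonneg _ _ hq1nn zero_le_one]
              norm_num
            rw [hsplit, ENNReal.rpow_one]
            exact mul_le_mul_left (ENNReal.rpow_le_rpow (hgz y) hq1nn) _
        _ = ENNReal.ofReal (A * s ^ α) ^ (q - 1) *
              ∫⁻ y in Ω, μ (closedBall y s) ∂volume :=
            lintegral_const_mul _ (meas_ballmass μ s)
        _ ≤ ENNReal.ofReal (A * s ^ α) ^ (q - 1) * ∫⁻ y, μ (closedBall y s) ∂volume :=
            mul_le_mul_right (setLIntegral_le_lintegral _ _) _
        _ = ENNReal.ofReal (A * s ^ α) ^ (q - 1) * (ENNReal.ofReal (s ^ n) * V * M) := by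
            rw [total_mass μ hs0.le]
    have b5 : (∫⁻ y in Ω, μ (closedBall y s) ^ q ∂volume) ^ (1/q)
        ≤ ENNReal.ofReal ((A * s ^ α) ^ (1/p)) *
            (ENNReal.ofReal ((s ^ n) ^ ((p-1)/p)) * (V * M) ^ ((p-1)/p)) := by
      refine le_trans (ENNReal.rpow_le_rpow b4 h1q) (le_of_eq ?_)
      rw [mul_assoc (ENNReal.ofReal (s ^ n)) V M,
        ENNReal.mul_rpow_of_nonneg _ _ h1q,
        ENNReal.mul_rpow_of_nonneg _ _ h1q,
        ← ENNReal.rpow_mul, he1, he2,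
        ENNReal.ofReal_rpow_of_nonneg (by positivity) h1p,
        ENNReal.ofReal_rpow_of_nonneg (by positivity) hep]
    calc (∫⁻ x in closedBall (0 : EuclideanSpace ℝ (Fin n)) r,
            ∫⁻ z, f (z + t • x) ∂μ ∂volume)
        = ENNReal.ofReal ((t ^ n)⁻¹) * ∫⁻ y, f y * μ (closedBall y s) ∂volume :=
          per_t μ f hf ht0
      _ = ENNReal.ofReal ((t ^ n)⁻¹) * ∫⁻ y in Ω, f y * μ (closedBall y s) ∂volume := by
          rw [b2]
      _ ≤ ENNReal.ofReal ((t ^ n)⁻¹) *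
            (K ^ (1/p) * (ENNReal.ofReal ((A * s ^ α) ^ (1/p)) *
              (ENNReal.ofReal ((s ^ n) ^ ((p-1)/p)) * (V * M) ^ ((p-1)/p)))) :=
          mul_le_mul_right (le_trans b3 (mul_le_mul_right b5 _)) _
      _ = ENNReal.ofReal ((t ^ n)⁻¹ * ((A * s ^ α) ^ (1/p) * (s ^ n) ^ ((p-1)/p))) *
            ((V * M) ^ ((p-1)/p) * K ^ (1/p)) := by
          rw [ENNReal.ofReal_mul (by positivity : (0:ℝ) ≤ (t ^ n)⁻¹),
            ENNReal.ofReal_mul (by positivity : (0:ℝ) ≤ (A * s ^ α) ^ (1/p))]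
          ring
      _ = ENNReal.ofReal (t ^ e) * C₀ := by
          rw [hsdef, real_id hA ht0 hr hppos, ← hedef, ← hDdef,
            ENNReal.ofReal_mul (Real.rpow_nonneg ht0.le e), hC₀def]
          ring
  have hm2 : Measurable fun q : (EuclideanSpace ℝ (Fin n) × ℝ) × EuclideanSpace ℝ (Fin n) =>
      f (q.2 + q.1.2 • q.1.1) :=
    hf.comp (continuous_snd.add (continuous_fst.snd.smul continuous_fst.fst)).measurable
  have hF : Measurable fun q : EuclideanSpace ℝ (Fin n) × ℝ =>
      ∫⁻ z, f (z + q.2 • q.1) ∂μ := hm2.lintegral_prod_right'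
  have hIccIoc : volume.restrict (Icc (0:ℝ) 1) = volume.restrict (Ioc (0:ℝ) 1) :=
    (Measure.restrict_congr_set Ioc_ae_eq_Icc).symm
  have hgm : Measurable fun t : ℝ => ENNReal.ofReal (t ^ e) * C₀ :=
    (ENNReal.measurable_ofReal.comp (measurable_id.pow_const e)).mul_const C₀
  have hfrac : (1:ℝ) / (e + 1) = p / (p - n + α) := by
    have h1 : e + 1 = (p - n + α) / p := by
      rw [hedef]
      field_simp
      ring
    rw [h1, one_div_div]
  have hsc : ENNReal.ofReal (p / (p - n + α)) * ENNReal.ofReal (A ^ (1/p) * r ^ (α/p))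
      = ENNReal.ofReal (A ^ (1 / p) * p / (p - n + α) * r ^ (α / p)) := by
    rw [← ENNReal.ofReal_mul (div_nonneg hppos.le hpα.le)]
    congr 1
    ring
  have hrn : (V * ENNReal.ofReal (r ^ n) * M) ^ ((p - 1) / p)
      = ENNReal.ofReal (r ^ ((n : ℝ) * ((p-1)/p))) * (V * M) ^ ((p-1)/p) := by
    have h1 : V * ENNReal.ofReal (r ^ n) * M = ENNReal.ofReal (r ^ n) * (V * M) := by ring
    rw [h1, ENNReal.mul_rpow_of_nonneg _ _ hep,
      ENNReal.ofReal_rpow_of_nonneg (by positivity) hep,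
      ← Real.rpow_natCast r n, ← Real.rpow_mul hr.le]
  calc (∫⁻ x in closedBall (0 : EuclideanSpace ℝ (Fin n)) r,
          ∫⁻ t in Icc (0 : ℝ) 1, ∫⁻ z, f (z + t • x) ∂μ ∂volume ∂volume)
      = ∫⁻ t in Icc (0:ℝ) 1, ∫⁻ x in closedBall (0 : EuclideanSpace ℝ (Fin n)) r,
          ∫⁻ z, f (z + t • x) ∂μ ∂volume ∂volume :=
        lintegral_lintegral_swap hF.aemeasurable
    _ = ∫⁻ t in Ioc (0:ℝ) 1, ∫⁻ x in closedBall (0 : EuclideanSpace ℝ (Fin n)) r,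
          ∫⁻ z, f (z + t • x) ∂μ ∂volume ∂volume := by rw [hIccIoc]
    _ ≤ ∫⁻ t in Ioc (0:ℝ) 1, ENNReal.ofReal (t ^ e) * C₀ ∂volume :=
        setLIntegral_mono hgm key
    _ = (∫⁻ t in Ioc (0:ℝ) 1, ENNReal.ofReal (t ^ e) ∂volume) * C₀ :=
        lintegral_mul_const _ (ENNReal.measurable_ofReal.comp (measurable_id.pow_const e))
    _ = ENNReal.ofReal (1/(e+1)) * C₀ := by rw [lint_rpow_Ioc he]
    _ = ENNReal.ofReal (A ^ (1 / p) * p / (p - n + α) * r ^ (α / p)) *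
          (V * ENNReal.ofReal (r ^ n) * M) ^ ((p - 1) / p) * K ^ (1 / p) := by
        rw [hfrac, hrn, hC₀def, hDdef,
          ENNReal.ofReal_mul (by positivity : (0:ℝ) ≤ A ^ (1/p) * r ^ (α/p)),
          ← hsc]
        ring
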